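/- Let K be an n×n complex matrix, p a determinantal point process with marginal kernel K, and a : Fin n an index with K a a ≠ 1. Let B = Fin n \ {a}, and define K'' = K_B − (K a a − 1)⁻¹ · K_{B,{a}} · K_{{a},B}, a matrix indexed by B. Then for every finset Y with a ∉ Y, the sum of p(S) over all finsets S with Y ⊆ S and a ∉ S equals (1 − K a a) · det(K''_Y). In other words, the conditional law of 𝐘 given a ∉ 𝐘 is a determinantal point process on the ground set Fin n \ {a} with marginal kernel K''. -/
import Mathlib


open Matrix

/-- The submatrix of `K` with rows indexed by `A` and columns indexed by `B`. -/
def kSub {n : ℕ} (K : Matrix (Fin n) (Fin n) ℂ) (A B : Finset (Fin n)) :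
    Matrix A B ℂ :=
  Matrix.of fun i j => K i j

/-- `p` is a determinantal point process with marginal kernel `K`:
`p` is a probability mass function on finsets of `Fin n` and for every finset `Y`
the probability that `Y` is contained in the sample equals `det (K_Y)`. -/
def IsDPP {n : ℕ} (K : Matrix (Fin n) (Fin n) ℂ) (p : Finset (Fin n) → ℝ) : Prop :=
  (∀ S, 0 ≤ p S) ∧ (∑ S : Finset (Fin n), p S = 1) ∧
    ∀ Y : Finset (Fin n),
      ((∑ S ∈ Finset.univ.filter fun S => Y ⊆ S, p S : ℝ) : ℂ) =
        (kSub K Y Y).det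


/-- Restriction of a matrix indexed by a finset `B` to a finset `Y ⊆ B`. -/
def kRestrict {n : ℕ} {B : Finset (Fin n)} (M : Matrix B B ℂ) (Y : Finset (Fin n))
    (h : Y ⊆ B) : Matrix Y Y ℂ :=
  Matrix.of fun i j => M ⟨i, h i.2⟩ ⟨j, h j.2⟩

lemma det_aux {n : ℕ} (K : Matrix (Fin n) (Fin n) ℂ) (a : Fin n) (ha : K a a ≠ 1)
    (Y : Finset (Fin n)) (hY : a ∉ Y) (h : Y ⊆ {a}ᶜ) :
    (kSub K Y Y).det - (kSub K (insert a Y) (insert a Y)).det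
      = (1 - K a a) * (kRestrict
          (kSub K {a}ᶜ {a}ᶜ - (K a a - 1)⁻¹ • (kSub K {a}ᶜ {a} * kSub K {a} {a}ᶜ))
          Y h).det := by
  classical
  set A : Matrix Y Y ℂ := kSub K Y Y with hA
  set Bm : Matrix Y Unit ℂ := Matrix.of (fun i _ => K i a) with hBm
  set Cm : Matrix Unit Y ℂ := Matrix.of (fun _ j => K a j) with hCm
  set D : Matrix Unit Unit ℂ := Matrix.of (fun _ _ => K a a) with hD
  set D1 : Matrix Unit Unit ℂ := Matrix.of (fun _ _ => K a a - 1) with hD1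
  have hne : K a a - 1 ≠ 0 := sub_ne_zero_of_ne ha
  -- equiv
  obtain ⟨e, he1, he2⟩ : ∃ e : (Y ⊕ Unit) ≃ (insert a Y : Finset (Fin n)),
      (∀ y : Y, ((e (Sum.inl y) : Fin n) = y)) ∧ ∀ u, ((e (Sum.inr u) : Fin n) = a) :=
    ⟨
    { toFun := Sum.elim
        (fun (y : Y) => (⟨y.1, Finset.mem_insert_of_mem y.2⟩ : (insert a Y : Finset (Fin n))))
        (fun _ => (⟨a, Finset.mem_insert_self a Y⟩ : (insert a Y : Finset (Fin n))))
      invFun := fun x => if hx : (x : Fin n) ∈ Y then Sum.inl ⟨x, hx⟩ else Sum.inr ()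
      left_inv := by
        rintro (y | u)
        · simp [y.2]
        · simp [hY]
      right_inv := by
        rintro ⟨x, hx⟩
        rcases Finset.mem_insert.mp hx with rfl | hx'
        · simp [hY]
        · simp [hx'] }, fun y => rfl, fun u => rfl⟩
  have hsub : (kSub K (insert a Y) (insert a Y)).submatrix e e = fromBlocks A Bm Cm D := by
    ext i j
    rcases i with (i | i) <;> rcases j with (j | j) <;>
      simp [kSub, fromBlocks, hA, hBm, hCm, hD, he1, he2]
  have hdet1 : (kSub K (insert a Y) (insert a Y)).det = (fromBlocks A Bm Cm D).det := by
    rw [← Matrix.det_submatrix_equiv_self e, hsub]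
  -- row linearity
  set rowu : Y ⊕ Unit → ℂ := Sum.elim (fun j => K a j) (fun _ => K a a - 1) with hrowu
  set rowv : Y ⊕ Unit → ℂ := Sum.elim (fun _ => (0:ℂ)) (fun _ => 1) with hrowv
  have hrow : fromBlocks A Bm Cm D =
      (fromBlocks A Bm Cm D).updateRow (Sum.inr ()) (rowu + rowv) := by
    rw [show rowu + rowv = (fromBlocks A Bm Cm D) (Sum.inr ()) from ?_,
      Matrix.updateRow_eq_self]
    funext x
    rcases x with (x | x) <;> simp [hrowu, hrowv, fromBlocks, hCm, hD]
  have hu : (fromBlocks A Bm Cm D).updateRow (Sum.inr ()) rowu = fromBlocks A Bm Cm D1 := by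
    ext i j
    rcases i with (i | i) <;> rcases j with (j | j) <;>
      simp [Matrix.updateRow_apply, hrowu, fromBlocks, hCm, hD, hD1]
  have hv : (fromBlocks A Bm Cm D).updateRow (Sum.inr ()) rowv = fromBlocks A Bm 0 1 := by
    ext i j
    rcases i with (i | i) <;> rcases j with (j | j) <;>
      simp [Matrix.updateRow_apply, hrowv, fromBlocks, Matrix.one_apply]
  have hsplit : (fromBlocks A Bm Cm D).det = (fromBlocks A Bm Cm D1).det + A.det := by
    conv_lhs => rw [hrow]
    rw [Matrix.det_updateRow_add, hu, hv, Matrix.det_fromBlocks_zero₂₁, Matrix.det_one,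
      mul_one]
  -- Schur
  have hinv : Invertible D1 :=
    ⟨Matrix.of (fun _ _ => (K a a - 1)⁻¹), by
      ext i j
      simp [Matrix.mul_apply, hD1, inv_mul_cancel₀ hne, Matrix.one_apply], by
      ext i j
      simp [Matrix.mul_apply, hD1, mul_inv_cancel₀ hne, Matrix.one_apply]⟩
  have hschur : (fromBlocks A Bm Cm D1).det = D1.det * (A - Bm * ⅟D1 * Cm).det :=
    Matrix.det_fromBlocks₂₂ A Bm Cm D1
  have hD1det : D1.det = K a a - 1 := by
    simp [hD1, Matrix.det_unique]
  have hinvOf : (⅟D1 : Matrix Unit Unit ℂ) = Matrix.of (fun _ _ => (K a a - 1)⁻¹) :=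
    invOf_eq_right_inv (by
      ext i j
      simp [Matrix.mul_apply, hD1, mul_inv_cancel₀ hne, Matrix.one_apply])
  have hmat : A - Bm * ⅟D1 * Cm = kRestrict
      (kSub K {a}ᶜ {a}ᶜ - (K a a - 1)⁻¹ • (kSub K {a}ᶜ {a} * kSub K {a} {a}ᶜ)) Y h := by
    ext i j
    have hdef : ((default : ({a} : Finset (Fin n))) : Fin n) = a :=
      Finset.mem_singleton.mp (Subtype.prop _)
    simp only [Matrix.sub_apply, Matrix.mul_apply, hinvOf, kRestrict, kSub, hA, hBm, hCm,
      Matrix.of_apply, Matrix.smul_apply, Fintype.sum_unique, smul_eq_mul]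
    rw [hdef]
    ring
  rw [hdet1, hsplit, hschur, hD1det, hmat]
  ring

theorem stmt_15 {n : ℕ} (K : Matrix (Fin n) (Fin n) ℂ) (p : Finset (Fin n) → ℝ)
    (hp : IsDPP K p) (a : Fin n) (ha : K a a ≠ 1) :
    ∀ Y : Finset (Fin n), (hY : a ∉ Y) →
      ((∑ S ∈ Finset.univ.filter fun S => Y ⊆ S ∧ a ∉ S, p S : ℝ) : ℂ) =
        (1 - K a a) *
          (kRestrict
              (kSub K {a}ᶜ {a}ᶜ -
                (K a a - 1)⁻¹ • (kSub K {a}ᶜ {a} * kSub K {a} {a}ᶜ))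
              Y
              (by
                intro x hx
                simp only [Finset.mem_compl, Finset.mem_singleton]
                rintro rfl
                exact hY hx)).det := by
  classical
  intro Y hY
  have key : (∑ S ∈ Finset.univ.filter fun S => Y ⊆ S ∧ a ∉ S, p S)
      = (∑ S ∈ Finset.univ.filter fun S => Y ⊆ S, p S)
        - ∑ S ∈ Finset.univ.filter fun S => insert a Y ⊆ S, p S := by
    have h1 := Finset.sum_filter_add_sum_filter_not
      (Finset.univ.filter fun S : Finset (Fin n) => Y ⊆ S) (fun S => a ∈ S) p
    rw [Finset.filter_filter, Finset.filter_filter] at h1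
    have h2 : (Finset.univ.filter fun S : Finset (Fin n) => Y ⊆ S ∧ a ∈ S)
        = Finset.univ.filter fun S => insert a Y ⊆ S := by
      apply Finset.filter_congr
      intro S _
      simp [Finset.insert_subset_iff, and_comm]
    have h3 : (Finset.univ.filter fun S : Finset (Fin n) => Y ⊆ S ∧ ¬ a ∈ S)
        = Finset.univ.filter fun S => Y ⊆ S ∧ a ∉ S := rfl
    rw [h2, h3] at h1
    linarith
  rw [key, Complex.ofReal_sub, hp.2.2 Y, hp.2.2 (insert a Y)]
  exact det_aux K a ha Y hY _
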